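/- Let x ∈ [1,∞)⁶ and i ∈ {2,3,5,6}. If ∂φ/∂xᵢ(x) ≥ 0 and ∂φ/∂x_{î}(x) ≥ 0, then for all t, s ≥ 0 one has φ(x) ≤ φ(x + t·mᵢ + s·m_{î}). -/

import Mathlib

open Real

/-- The cosine of the dihedral angle at the edge `e₁` of a generalized hyper-ideal
tetrahedron whose edge lengths `lᵢ` satisfy `cosh lᵢ = xᵢ`. -/
noncomputable def phi (x1 x2 x3 x4 x5 x6 : ℝ) : ℝ :=
  (x2 * x3 + x5 * x6 + x1 * x2 * x5 + x1 * x3 * x6 - x1 ^ 2 * x4 + x4) /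
    (Real.sqrt (2 * x1 * x2 * x6 + x1 ^ 2 + x2 ^ 2 + x6 ^ 2 - 1) *
      Real.sqrt (2 * x1 * x3 * x5 + x1 ^ 2 + x3 ^ 2 + x5 ^ 2 - 1))

/-- `phi` as a function of a vector `x : Fin 6 → ℝ`, where `x ⟨k-1⟩` plays the
role of the coordinate `x_k`, `k = 1, …, 6`. -/
noncomputable def phiV (x : Fin 6 → ℝ) : ℝ :=
  phi (x 0) (x 1) (x 2) (x 3) (x 4) (x 5)

/-- The partial derivative `∂φ/∂x_{i+1}` of `phiV` in the `i`-th coordinate at `x`. -/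
noncomputable def pphi (i : Fin 6) (x : Fin 6 → ℝ) : ℝ :=
  deriv (fun u => phiV (Function.update x i u)) (x i)

/-- The pairing `2̂ = 5, 3̂ = 6, 5̂ = 2, 6̂ = 3` of the indices `{2,3,5,6}`; in the
`0`-based indexing of `Fin 6` the pairs are `(1,4), (2,5), (4,1), (5,2)`. -/
def IsPairedIndex (i ih : Fin 6) : Prop :=
  (i = 1 ∧ ih = 4) ∨ (i = 2 ∧ ih = 5) ∨ (i = 4 ∧ ih = 1) ∨ (i = 5 ∧ ih = 2)

/-! ### Auxiliary material -/

lemma phi_symm1 (a b c d e f : ℝ) : phi a b c d e f = phi a e f d b c := by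
  unfold phi; rw [mul_comm]; ring_nf

lemma phi_symm2 (a b c d e f : ℝ) : phi a b c d e f = phi a c b d f e := by
  unfold phi; rw [mul_comm]; ring_nf

lemma phi_symm3 (a b c d e f : ℝ) : phi a b c d e f = phi a f e d c b := by
  unfold phi; ring_nf

/-- The polynomial controlling the sign of `∂φ/∂x₂`. -/
noncomputable def Fq (a b c d e f : ℝ) : ℝ :=
  (c + a*e) * (2*a*b*f + a^2 + b^2 + f^2 - 1)
    - (b*c + e*f + a*b*e + a*c*f - a^2*d + d) * (a*f + b)

lemma Ppos {a b f : ℝ} (ha : 1 ≤ a) (hb : 1 ≤ b) (hf : 1 ≤ f) :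
    0 < 2*a*b*f + a^2 + b^2 + f^2 - 1 := by
  have h0 : (0:ℝ) ≤ a * b := by nlinarith
  nlinarith [mul_nonneg h0 (by linarith : (0:ℝ) ≤ f)]

lemma hasDerivAt_phi2 (a c d e f u : ℝ) (ha : 1 ≤ a) (hc : 1 ≤ c) (he : 1 ≤ e)
    (hf : 1 ≤ f) (hu : 1 ≤ u) :
    HasDerivAt (fun b => phi a b c d e f)
      (Fq a u c d e f /
        (Real.sqrt (2*a*u*f + a^2 + u^2 + f^2 - 1) ^ 3
          * Real.sqrt (2*a*c*e + a^2 + c^2 + e^2 - 1))) u := by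
  have hP : (0:ℝ) < 2*a*u*f + a^2 + u^2 + f^2 - 1 := Ppos ha hu hf
  have hQ : (0:ℝ) < 2*a*c*e + a^2 + c^2 + e^2 - 1 := Ppos ha hc he
  have hsQ : 0 < Real.sqrt (2*a*c*e + a^2 + c^2 + e^2 - 1) := Real.sqrt_pos.2 hQ
  have hsP : 0 < Real.sqrt (2*a*u*f + a^2 + u^2 + f^2 - 1) := Real.sqrt_pos.2 hP
  have hPder : HasDerivAt (fun b : ℝ => 2*a*b*f + a^2 + b^2 + f^2 - 1) (2*a*f + 2*u) u := by
    have h1 : HasDerivAt (fun b : ℝ => 2*a*b*f) (2*a*f) u := by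
      simpa using (((hasDerivAt_id u).const_mul (2*a)).mul_const f)
    have h2 : HasDerivAt (fun b : ℝ => b^2) (2*u) u := by
      simpa using (hasDerivAt_pow 2 u)
    simpa using (((h1.add_const (a^2)).add h2).add_const (f^2)).sub_const 1
  have hSder : HasDerivAt (fun b : ℝ => Real.sqrt (2*a*b*f + a^2 + b^2 + f^2 - 1))
      ((2*a*f + 2*u) / (2 * Real.sqrt (2*a*u*f + a^2 + u^2 + f^2 - 1))) u :=
    hPder.sqrt hP.ne'
  have hNder : HasDerivAt (fun b : ℝ => b*c + e*f + a*b*e + a*c*f - a^2*d + d)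
      (c + a*e) u := by
    have h1 : HasDerivAt (fun b : ℝ => a*b*e) (a*e) u := by
      simpa using (((hasDerivAt_id u).const_mul a).mul_const e)
    simpa using (((((hasDerivAt_id u).mul_const c).add_const (e*f)).add h1).add_const
      (a*c*f)).sub_const (a^2*d) |>.add_const d
  have hDen := hSder.mul_const (Real.sqrt (2*a*c*e + a^2 + c^2 + e^2 - 1))
  have hden_ne : Real.sqrt (2*a*u*f + a^2 + u^2 + f^2 - 1)
      * Real.sqrt (2*a*c*e + a^2 + c^2 + e^2 - 1) ≠ 0 := (mul_pos hsP hsQ).ne'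
  have hdiv := hNder.div hDen hden_ne
  have hfun : (fun b : ℝ => phi a b c d e f)
      = fun b : ℝ => (b*c + e*f + a*b*e + a*c*f - a^2*d + d) /
          (Real.sqrt (2*a*b*f + a^2 + b^2 + f^2 - 1)
            * Real.sqrt (2*a*c*e + a^2 + c^2 + e^2 - 1)) := by
    funext b; unfold phi; ring_nf
  rw [hfun]
  refine hdiv.congr_deriv ?_
  have hFq : Fq a u c d e f
      = (c + a*e) * (Real.sqrt (2*a*u*f + a^2 + u^2 + f^2 - 1))^2
        - (u*c + e*f + a*u*e + a*c*f - a^2*d + d) * (a*f + u) := by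
    rw [Real.sq_sqrt hP.le]; unfold Fq; ring
  rw [hFq]
  generalize hS : Real.sqrt (2*a*u*f + a^2 + u^2 + f^2 - 1) = S
  generalize hT : Real.sqrt (2*a*c*e + a^2 + c^2 + e^2 - 1) = T
  rw [hS] at hsP
  rw [hT] at hsQ
  field_simp

lemma Fq_persist {a b c d e f b' e' : ℝ} (ha : 1 ≤ a) (hd : 1 ≤ d) (hf : 1 ≤ f)
    (hb : 1 ≤ b) (he : 1 ≤ e) (hb' : b ≤ b') (he' : e ≤ e')
    (hF : 0 ≤ Fq a b c d e f) : 0 ≤ Fq a b' c d e' f := by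
  have key : Fq a b' c d e' f
      = Fq a b c d e f + (a^2-1) * ((b'-b)*(d+e*f) + (e'-e)*(b'*f+a)) := by
    unfold Fq; ring
  have h1 : (0:ℝ) ≤ a^2 - 1 := by nlinarith
  have h2 : (0:ℝ) ≤ (b'-b)*(d+e*f) := by
    apply mul_nonneg (by linarith); nlinarith
  have h3 : (0:ℝ) ≤ (e'-e)*(b'*f+a) := by
    apply mul_nonneg (by linarith); nlinarith
  nlinarith [mul_nonneg h1 (by linarith : (0:ℝ) ≤ (b'-b)*(d+e*f) + (e'-e)*(b'*f+a))]

lemma phi_mono2 {a b c d e f t : ℝ} (ha : 1 ≤ a) (hb : 1 ≤ b) (hc : 1 ≤ c)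
    (hd : 1 ≤ d) (he : 1 ≤ e) (hf : 1 ≤ f) (ht : 0 ≤ t)
    (hF : 0 ≤ Fq a b c d e f) : phi a b c d e f ≤ phi a (b+t) c d e f := by
  have hmono : MonotoneOn (fun u => phi a u c d e f) (Set.Icc b (b+t)) := by
    apply monotoneOn_of_deriv_nonneg (convex_Icc b (b+t))
    · intro u hu
      have hu1 : 1 ≤ u := le_trans hb hu.1
      exact ((hasDerivAt_phi2 a c d e f u ha hc he hf hu1).differentiableAt).continuousAt.continuousWithinAt
    · intro u hu
      rw [interior_Icc] at hu
      exact ((hasDerivAt_phi2 a c d e f u ha hc he hf (by linarith [hu.1])).differentiableAt).differentiableWithinAt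
    · intro u hu
      rw [interior_Icc] at hu
      have hu1 : 1 ≤ u := by linarith [hu.1]
      rw [(hasDerivAt_phi2 a c d e f u ha hc he hf hu1).deriv]
      apply div_nonneg
      · exact Fq_persist ha hd hf hb he (le_of_lt hu.1) le_rfl hF
      · have hsP : 0 < Real.sqrt (2*a*u*f + a^2 + u^2 + f^2 - 1) :=
          Real.sqrt_pos.2 (Ppos ha hu1 hf)
        have hsQ : 0 < Real.sqrt (2*a*c*e + a^2 + c^2 + e^2 - 1) :=
          Real.sqrt_pos.2 (Ppos ha hc he)
        positivity
  exact hmono (Set.left_mem_Icc.2 (by linarith)) (Set.right_mem_Icc.2 (by linarith)) (by linarith)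

lemma scalarMain {a b c d e f t s : ℝ} (ha : 1 ≤ a) (hb : 1 ≤ b) (hc : 1 ≤ c)
    (hd : 1 ≤ d) (he : 1 ≤ e) (hf : 1 ≤ f) (ht : 0 ≤ t) (hs : 0 ≤ s)
    (h2 : 0 ≤ Fq a b c d e f) (h5 : 0 ≤ Fq a e f d b c) :
    phi a b c d e f ≤ phi a (b+t) c d (e+s) f := by
  have step1 : phi a b c d e f ≤ phi a (b+t) c d e f :=
    phi_mono2 ha hb hc hd he hf ht h2
  have h5' : 0 ≤ Fq a e f d (b+t) c :=
    Fq_persist ha hd hc he hb le_rfl (by linarith) h5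
  have step2 : phi a e f d (b+t) c ≤ phi a (e+s) f d (b+t) c :=
    phi_mono2 ha he hf hd (by linarith) hc hs h5'
  calc phi a b c d e f ≤ phi a (b+t) c d e f := step1
    _ = phi a e f d (b+t) c := phi_symm1 a (b+t) c d e f
    _ ≤ phi a (e+s) f d (b+t) c := step2
    _ = phi a (b+t) c d (e+s) f := (phi_symm1 a (b+t) c d (e+s) f).symm

lemma Fq_of_deriv {a b c d e f : ℝ} (ha : 1 ≤ a) (hb : 1 ≤ b) (hc : 1 ≤ c)
    (he : 1 ≤ e) (hf : 1 ≤ f)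
    (h : 0 ≤ deriv (fun u => phi a u c d e f) b) : 0 ≤ Fq a b c d e f := by
  rw [(hasDerivAt_phi2 a c d e f b ha hc he hf hb).deriv] at h
  have hsP : 0 < Real.sqrt (2*a*b*f + a^2 + b^2 + f^2 - 1) :=
    Real.sqrt_pos.2 (Ppos ha hb hf)
  have hsQ : 0 < Real.sqrt (2*a*c*e + a^2 + c^2 + e^2 - 1) :=
    Real.sqrt_pos.2 (Ppos ha hc he)
  have hDpos : 0 < Real.sqrt (2*a*b*f + a^2 + b^2 + f^2 - 1) ^ 3
      * Real.sqrt (2*a*c*e + a^2 + c^2 + e^2 - 1) := by positivity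
  have := mul_nonneg h hDpos.le
  rwa [div_mul_cancel₀ _ hDpos.ne'] at this

theorem phi_monotone_pair (x : Fin 6 → ℝ) (hx : ∀ j, 1 ≤ x j)
    (i ih : Fin 6) (hpair : IsPairedIndex i ih)
    (hd : 0 ≤ pphi i x) (hd' : 0 ≤ pphi ih x) :
    ∀ t s : ℝ, 0 ≤ t → 0 ≤ s →
      phiV x ≤ phiV (x + t • (Pi.single i 1 : Fin 6 → ℝ) + s • (Pi.single ih 1 : Fin 6 → ℝ)) := by
  intro t s ht hs
  have ha := hx 0; have hb := hx 1; have hc := hx 2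
  have hd4 := hx 3; have he := hx 4; have hf := hx 5
  have e1 : (fun u => phiV (Function.update x 1 u))
      = fun u => phi (x 0) u (x 2) (x 3) (x 4) (x 5) := by
    funext u; simp [phiV, Function.update]
  have e4 : (fun u => phiV (Function.update x 4 u))
      = fun u => phi (x 0) u (x 5) (x 3) (x 1) (x 2) := by
    funext u
    have h0 : phiV (Function.update x 4 u) = phi (x 0) (x 1) (x 2) (x 3) u (x 5) := by
      simp [phiV, Function.update]
    rw [h0]; exact (phi_symm1 (x 0) u (x 5) (x 3) (x 1) (x 2)).symm
  have e2 : (fun u => phiV (Function.update x 2 u))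
      = fun u => phi (x 0) u (x 1) (x 3) (x 5) (x 4) := by
    funext u
    have h0 : phiV (Function.update x 2 u) = phi (x 0) (x 1) u (x 3) (x 4) (x 5) := by
      simp [phiV, Function.update]
    rw [h0]; exact (phi_symm2 (x 0) u (x 1) (x 3) (x 5) (x 4)).symm
  have e5 : (fun u => phiV (Function.update x 5 u))
      = fun u => phi (x 0) u (x 4) (x 3) (x 2) (x 1) := by
    funext u
    have h0 : phiV (Function.update x 5 u) = phi (x 0) (x 1) (x 2) (x 3) (x 4) u := by
      simp [phiV, Function.update]
    rw [h0]; exact (phi_symm3 (x 0) u (x 4) (x 3) (x 2) (x 1)).symm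
  rcases hpair with ⟨hi, hih⟩ | ⟨hi, hih⟩ | ⟨hi, hih⟩ | ⟨hi, hih⟩ <;> subst hi <;> subst hih
  · -- i = 1, ih = 4
    have hF2 : 0 ≤ Fq (x 0) (x 1) (x 2) (x 3) (x 4) (x 5) := by
      apply Fq_of_deriv ha hb hc he hf
      simp only [pphi, e1] at hd; exact hd
    have hF5 : 0 ≤ Fq (x 0) (x 4) (x 5) (x 3) (x 1) (x 2) := by
      apply Fq_of_deriv ha he hf hb hc
      simp only [pphi, e4] at hd'; exact hd'
    have heval : phiV (x + t • (Pi.single 1 1 : Fin 6 → ℝ) + s • (Pi.single 4 1 : Fin 6 → ℝ))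
        = phi (x 0) (x 1 + t) (x 2) (x 3) (x 4 + s) (x 5) := by
      simp [phiV, Pi.single_apply]
    rw [heval]
    exact scalarMain ha hb hc hd4 he hf ht hs hF2 hF5
  · -- i = 2, ih = 5
    have hF2 : 0 ≤ Fq (x 0) (x 2) (x 1) (x 3) (x 5) (x 4) := by
      apply Fq_of_deriv ha hc hb hf he
      simp only [pphi, e2] at hd; exact hd
    have hF5 : 0 ≤ Fq (x 0) (x 5) (x 4) (x 3) (x 2) (x 1) := by
      apply Fq_of_deriv ha hf he hc hb
      simp only [pphi, e5] at hd'; exact hd'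
    have heval : phiV (x + t • (Pi.single 2 1 : Fin 6 → ℝ) + s • (Pi.single 5 1 : Fin 6 → ℝ))
        = phi (x 0) (x 1) (x 2 + t) (x 3) (x 4) (x 5 + s) := by
      simp [phiV, Pi.single_apply]
    rw [heval]
    show phi (x 0) (x 1) (x 2) (x 3) (x 4) (x 5)
      ≤ phi (x 0) (x 1) (x 2 + t) (x 3) (x 4) (x 5 + s)
    rw [phi_symm2 (x 0) (x 1) (x 2) (x 3) (x 4) (x 5),
      phi_symm2 (x 0) (x 1) (x 2 + t) (x 3) (x 4) (x 5 + s)]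
    exact scalarMain ha hc hb hd4 hf he ht hs hF2 hF5
  · -- i = 4, ih = 1
    have hF2 : 0 ≤ Fq (x 0) (x 1) (x 2) (x 3) (x 4) (x 5) := by
      apply Fq_of_deriv ha hb hc he hf
      simp only [pphi, e1] at hd'; exact hd'
    have hF5 : 0 ≤ Fq (x 0) (x 4) (x 5) (x 3) (x 1) (x 2) := by
      apply Fq_of_deriv ha he hf hb hc
      simp only [pphi, e4] at hd; exact hd
    have heval : phiV (x + t • (Pi.single 4 1 : Fin 6 → ℝ) + s • (Pi.single 1 1 : Fin 6 → ℝ))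
        = phi (x 0) (x 1 + s) (x 2) (x 3) (x 4 + t) (x 5) := by
      simp [phiV, Pi.single_apply]
    rw [heval]
    exact scalarMain ha hb hc hd4 he hf hs ht hF2 hF5
  · -- i = 5, ih = 2
    have hF2 : 0 ≤ Fq (x 0) (x 2) (x 1) (x 3) (x 5) (x 4) := by
      apply Fq_of_deriv ha hc hb hf he
      simp only [pphi, e2] at hd'; exact hd'
    have hF5 : 0 ≤ Fq (x 0) (x 5) (x 4) (x 3) (x 2) (x 1) := by
      apply Fq_of_deriv ha hf he hc hb
      simp only [pphi, e5] at hd; exact hd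
    have heval : phiV (x + t • (Pi.single 5 1 : Fin 6 → ℝ) + s • (Pi.single 2 1 : Fin 6 → ℝ))
        = phi (x 0) (x 1) (x 2 + s) (x 3) (x 4) (x 5 + t) := by
      simp [phiV, Pi.single_apply]
    rw [heval]
    show phi (x 0) (x 1) (x 2) (x 3) (x 4) (x 5)
      ≤ phi (x 0) (x 1) (x 2 + s) (x 3) (x 4) (x 5 + t)
    rw [phi_symm2 (x 0) (x 1) (x 2) (x 3) (x 4) (x 5),
      phi_symm2 (x 0) (x 1) (x 2 + s) (x 3) (x 4) (x 5 + t)]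
    exact scalarMain ha hc hb hd4 hf he hs ht hF2 hF5
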